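/- For any given incentive profile u, if f and f̄ are both Wardrop equilibrium flows of a routing game with path-specific node costs (edge and base node costs nonnegative, continuous, nondecreasing), then the marginal costs agree on every edge and node: c_e(f_e) = c_e(f̄_e) for every edge e, and c_v(f_v) = c_v(f̄_v) for every node v. -/
import Mathlib


open Set MeasureTheory intervalIntegral

section RoutingGame

variable {E V P : Type*} [Fintype E] [Fintype V] [Fintype P] [Nonempty P]
  [DecidableEq E] [DecidableEq V]

/-- Edge flow: total flow of paths containing edge `e`. -/
noncomputable def edgeFlow (pathE : P → Finset E) (f : P → ℝ) (e : E) : ℝ :=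
  ∑ p ∈ Finset.univ.filter (fun p => e ∈ pathE p), f p

/-- Node flow: total flow of paths containing node `v`. -/
noncomputable def nodeFlow (pathV : P → Finset V) (f : P → ℝ) (v : V) : ℝ :=
  ∑ p ∈ Finset.univ.filter (fun p => v ∈ pathV p), f p

/-- Feasible flows: nonnegative, summing to one. -/
def Feasible (f : P → ℝ) : Prop := (∀ p, 0 ≤ f p) ∧ ∑ p, f p = 1

/-- Path cost with additive path-specific node incentives. -/
noncomputable def pathCost (pathE : P → Finset E) (pathV : P → Finset V)
    (ce : E → ℝ → ℝ) (cv : V → ℝ → ℝ) (u : V → P → ℝ) (f : P → ℝ) (p : P) : ℝ :=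
  (∑ e ∈ pathE p, ce e (edgeFlow pathE f e)) +
  (∑ v ∈ pathV p, (cv v (nodeFlow pathV f v) + u v p))

/-- Wardrop equilibrium: every used path has minimal cost. -/
def IsWardrop (pathE : P → Finset E) (pathV : P → Finset V)
    (ce : E → ℝ → ℝ) (cv : V → ℝ → ℝ) (u : V → P → ℝ) (f : P → ℝ) : Prop :=
  ∀ p q : P, 0 < f p →
    pathCost pathE pathV ce cv u f p ≤ pathCost pathE pathV ce cv u f q

/-- The potential function `Φ(f,u)`. -/
noncomputable def potential (pathE : P → Finset E) (pathV : P → Finset V)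
    (ce : E → ℝ → ℝ) (cv : V → ℝ → ℝ) (u : V → P → ℝ) (f : P → ℝ) : ℝ :=
  (∑ e, ∫ s in (0:ℝ)..(edgeFlow pathE f e), ce e s) +
  (∑ v, ∫ s in (0:ℝ)..(nodeFlow pathV f v), cv v s) +
  (∑ p, f p * ∑ v ∈ pathV p, u v p)

/-- Social cost. -/
noncomputable def socialCost (pathE : P → Finset E) (pathV : P → Finset V)
    (ce : E → ℝ → ℝ) (cv : V → ℝ → ℝ) (u : V → P → ℝ) (f : P → ℝ) : ℝ :=
  ∑ p, f p * pathCost pathE pathV ce cv u f p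


set_option linter.unusedSectionVars false

lemma sum_mul_sum_comm' {A : Type*} [Fintype A] [DecidableEq A]
    (pa : P → Finset A) (g : P → ℝ) (a : A → ℝ) :
    ∑ p, g p * ∑ x ∈ pa p, a x
      = ∑ x : A, a x * ∑ p ∈ Finset.univ.filter (fun p => x ∈ pa p), g p := by
  simp_rw [Finset.mul_sum, Finset.sum_filter]
  rw [Finset.sum_comm]
  refine Finset.sum_congr rfl fun p _ => ?_
  simp [Finset.filter_univ_mem, mul_comm]

lemma flow_mem_Icc' {A : Type*} [DecidableEq A] (pa : P → Finset A) (f : P → ℝ) (hf : Feasible f)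
    (x : A) :
    (∑ p ∈ Finset.univ.filter (fun p => x ∈ pa p), f p) ∈ Set.Icc (0:ℝ) 1 := by
  constructor
  · exact Finset.sum_nonneg fun p _ => hf.1 p
  · rw [← hf.2]
    exact Finset.sum_le_sum_of_subset_of_nonneg (Finset.filter_subset _ _)
      (fun p _ _ => hf.1 p)

lemma wardrop_VI (pathE : P → Finset E) (pathV : P → Finset V)
    (ce : E → ℝ → ℝ) (cv : V → ℝ → ℝ) (u : V → P → ℝ)
    (f g : P → ℝ) (hf : Feasible f) (hg : Feasible g)
    (heq : IsWardrop pathE pathV ce cv u f) :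
    ∑ p, f p * pathCost pathE pathV ce cv u f p
      ≤ ∑ p, g p * pathCost pathE pathV ce cv u f p := by
  obtain ⟨p0, -, hp0⟩ : ∃ p ∈ Finset.univ, (0:ℝ) < f p := by
    apply Finset.exists_lt_of_sum_lt
    simp [hf.2]
  set L := pathCost pathE pathV ce cv u f p0 with hL
  have h1 : ∑ p, f p * pathCost pathE pathV ce cv u f p = L := by
    have : ∀ p ∈ Finset.univ, f p * pathCost pathE pathV ce cv u f p = f p * L := by
      intro p _
      rcases lt_or_eq_of_le (hf.1 p) with hp | hp
      · rw [le_antisymm (heq p p0 hp) (heq p0 p hp0)]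
      · rw [← hp]; ring
    rw [Finset.sum_congr rfl this, ← Finset.sum_mul, hf.2, one_mul]
  have h2 : L ≤ ∑ p, g p * pathCost pathE pathV ce cv u f p := by
    calc L = ∑ p, g p * L := by rw [← Finset.sum_mul, hg.2, one_mul]
    _ ≤ _ := Finset.sum_le_sum fun p _ =>
        mul_le_mul_of_nonneg_left (heq p0 p hp0) (hg.1 p)
  linarith

lemma sum_mul_pathCost (pathE : P → Finset E) (pathV : P → Finset V)
    (ce : E → ℝ → ℝ) (cv : V → ℝ → ℝ) (u : V → P → ℝ) (f g : P → ℝ) :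
    ∑ p, g p * pathCost pathE pathV ce cv u f p
      = (∑ e, ce e (edgeFlow pathE f e) * edgeFlow pathE g e)
      + (∑ v, cv v (nodeFlow pathV f v) * nodeFlow pathV g v)
      + ∑ p, g p * ∑ v ∈ pathV p, u v p := by
  have expand : ∀ p, pathCost pathE pathV ce cv u f p
      = (∑ e ∈ pathE p, ce e (edgeFlow pathE f e))
      + (∑ v ∈ pathV p, cv v (nodeFlow pathV f v)) + ∑ v ∈ pathV p, u v p := by
    intro p; rw [pathCost, Finset.sum_add_distrib]; ring
  simp_rw [expand, mul_add]
  rw [Finset.sum_add_distrib, Finset.sum_add_distrib,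
    sum_mul_sum_comm' pathE g, sum_mul_sum_comm' pathV g]
  rfl

/-- Any two Wardrop equilibrium flows induce the same marginal costs on
every edge and node. -/
theorem wardrop_marginal_costs_agree
    (pathE : P → Finset E) (pathV : P → Finset V)
    (ce : E → ℝ → ℝ) (cv : V → ℝ → ℝ) (u : V → P → ℝ)
    (hce_nn : ∀ e, ∀ x ∈ Set.Icc (0:ℝ) 1, 0 ≤ ce e x)
    (hce_cont : ∀ e, ContinuousOn (ce e) (Set.Icc (0:ℝ) 1))
    (hce_mono : ∀ e, MonotoneOn (ce e) (Set.Icc (0:ℝ) 1))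
    (hcv_nn : ∀ v, ∀ x ∈ Set.Icc (0:ℝ) 1, 0 ≤ cv v x)
    (hcv_cont : ∀ v, ContinuousOn (cv v) (Set.Icc (0:ℝ) 1))
    (hcv_mono : ∀ v, MonotoneOn (cv v) (Set.Icc (0:ℝ) 1))
    (f fbar : P → ℝ) (hf : Feasible f) (hfbar : Feasible fbar)
    (heqf : IsWardrop pathE pathV ce cv u f)
    (heqfbar : IsWardrop pathE pathV ce cv u fbar) :
    (∀ e : E, ce e (edgeFlow pathE f e) = ce e (edgeFlow pathE fbar e)) ∧
    (∀ v : V, cv v (nodeFlow pathV f v) = cv v (nodeFlow pathV fbar v)) := by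

  set xe := fun e => edgeFlow pathE f e with hxe
  set ye := fun e => edgeFlow pathE fbar e with hye
  set xv := fun v => nodeFlow pathV f v with hxv
  set yv := fun v => nodeFlow pathV fbar v with hyv
  have hxeI : ∀ e, xe e ∈ Set.Icc (0:ℝ) 1 := fun e => flow_mem_Icc' pathE f hf e
  have hyeI : ∀ e, ye e ∈ Set.Icc (0:ℝ) 1 := fun e => flow_mem_Icc' pathE fbar hfbar e
  have hxvI : ∀ v, xv v ∈ Set.Icc (0:ℝ) 1 := fun v => flow_mem_Icc' pathV f hf v
  have hyvI : ∀ v, yv v ∈ Set.Icc (0:ℝ) 1 := fun v => flow_mem_Icc' pathV fbar hfbar v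
  -- variational inequalities
  have VI1 := wardrop_VI pathE pathV ce cv u f fbar hf hfbar heqf
  have VI2 := wardrop_VI pathE pathV ce cv u fbar f hfbar hf heqfbar
  rw [sum_mul_pathCost pathE pathV ce cv u f f,
      sum_mul_pathCost pathE pathV ce cv u f fbar] at VI1
  rw [sum_mul_pathCost pathE pathV ce cv u fbar fbar,
      sum_mul_pathCost pathE pathV ce cv u fbar f] at VI2
  -- the key inequality
  have key : (∑ e, (ce e (xe e) - ce e (ye e)) * (xe e - ye e))
      + (∑ v, (cv v (xv v) - cv v (yv v)) * (xv v - yv v)) ≤ 0 := by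
    have expand1 : ∑ e, (ce e (xe e) - ce e (ye e)) * (xe e - ye e)
        = (∑ e, ce e (xe e) * xe e) - (∑ e, ce e (xe e) * ye e)
        - (∑ e, ce e (ye e) * xe e) + (∑ e, ce e (ye e) * ye e) := by
      simp_rw [sub_mul, mul_sub, Finset.sum_sub_distrib]; ring
    have expand2 : ∑ v, (cv v (xv v) - cv v (yv v)) * (xv v - yv v)
        = (∑ v, cv v (xv v) * xv v) - (∑ v, cv v (xv v) * yv v)
        - (∑ v, cv v (yv v) * xv v) + (∑ v, cv v (yv v) * yv v) := by
      simp_rw [sub_mul, mul_sub, Finset.sum_sub_distrib]; ring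
    rw [expand1, expand2]
    linarith
  have hTe : ∀ e ∈ Finset.univ, 0 ≤ (ce e (xe e) - ce e (ye e)) * (xe e - ye e) := by
    intro e _
    rcases le_total (xe e) (ye e) with h | h
    · have := hce_mono e (hxeI e) (hyeI e) h; nlinarith
    · have := hce_mono e (hyeI e) (hxeI e) h; nlinarith
  have hTv : ∀ v ∈ Finset.univ, 0 ≤ (cv v (xv v) - cv v (yv v)) * (xv v - yv v) := by
    intro v _
    rcases le_total (xv v) (yv v) with h | h
    · have := hcv_mono v (hxvI v) (hyvI v) h; nlinarith
    · have := hcv_mono v (hyvI v) (hxvI v) h; nlinarith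
  have hSe : 0 ≤ ∑ e, (ce e (xe e) - ce e (ye e)) * (xe e - ye e) :=
    Finset.sum_nonneg hTe
  have hSv : 0 ≤ ∑ v, (cv v (xv v) - cv v (yv v)) * (xv v - yv v) :=
    Finset.sum_nonneg hTv
  have hSe0 : ∑ e, (ce e (xe e) - ce e (ye e)) * (xe e - ye e) = 0 := by linarith
  have hSv0 : ∑ v, (cv v (xv v) - cv v (yv v)) * (xv v - yv v) = 0 := by linarith
  constructor
  · intro e
    have := (Finset.sum_eq_zero_iff_of_nonneg hTe).mp hSe0 e (Finset.mem_univ e)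
    rcases mul_eq_zero.mp this with h | h
    · linarith [h]
    · have : xe e = ye e := by linarith
      rw [show edgeFlow pathE f e = xe e from rfl, show edgeFlow pathE fbar e = ye e from rfl, this]
  · intro v
    have := (Finset.sum_eq_zero_iff_of_nonneg hTv).mp hSv0 v (Finset.mem_univ v)
    rcases mul_eq_zero.mp this with h | h
    · linarith [h]
    · have : xv v = yv v := by linarith
      rw [show nodeFlow pathV f v = xv v from rfl, show nodeFlow pathV fbar v = yv v from rfl, this]


end RoutingGame
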